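/- Let n ∈ ℕ, μ > 0 and x* ∈ ℝⁿ. The function y ↦ μ‖y‖₂ + (1/2)‖y − x*‖₂² has a unique global minimizer y*, given by y* = 0 if ‖x*‖₂ ≤ μ, and y* = (1 − μ/‖x*‖₂) · x* if ‖x*‖₂ > μ. -/

import Mathlib

open scoped RealInnerProductSpace


/-- The proximal mapping of `μ‖·‖₂` is the block soft-thresholding (shrinkage) operator. -/
theorem stmt_7 {n : ℕ} (μ : ℝ) (hμ : 0 < μ) (xstar : EuclideanSpace ℝ (Fin n))
    (g : EuclideanSpace ℝ (Fin n) → ℝ)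
    (hg : ∀ y, g y = μ * ‖y‖ + 1 / 2 * ‖y - xstar‖ ^ 2)
    (ystar : EuclideanSpace ℝ (Fin n))
    (hystar : ystar = if ‖xstar‖ ≤ μ then 0 else (1 - μ / ‖xstar‖) • xstar) :
    (∀ y, g ystar ≤ g y) ∧ ∀ y : EuclideanSpace ℝ (Fin n), (∀ z, g y ≤ g z) → y = ystar := by
  set t := ‖xstar‖ with ht
  have hg' : ∀ y : EuclideanSpace ℝ (Fin n),
      g y = μ * ‖y‖ + 1 / 2 * (‖y‖ ^ 2 - 2 * (inner ℝ y xstar : ℝ) + t ^ 2) := by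
    intro y
    rw [hg, norm_sub_sq_real y xstar]
  have hCS : ∀ y : EuclideanSpace ℝ (Fin n), (inner ℝ y xstar : ℝ) ≤ ‖y‖ * t :=
    fun y => real_inner_le_norm y xstar
  by_cases h : t ≤ μ
  · rw [if_pos h] at hystar
    subst hystar
    have hg0 : g 0 = 1 / 2 * t ^ 2 := by
      rw [hg']; simp
    constructor
    · intro y
      rw [hg0, hg' y]
      nlinarith [hCS y, norm_nonneg y, sq_nonneg ‖y‖]
    · intro y hy
      have h1 := hy 0
      rw [hg0, hg' y] at h1
      have hnorm : ‖y‖ = 0 := by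
        nlinarith [hCS y, norm_nonneg y, sq_nonneg ‖y‖]
      exact norm_eq_zero.mp hnorm
  · push_neg at h
    rw [if_neg (not_le.mpr h)] at hystar
    have ht0 : 0 < t := lt_trans hμ h
    have hc : (0:ℝ) < 1 - μ / t := by
      rw [sub_pos, div_lt_one ht0]; exact h
    have hny : ‖ystar‖ = t - μ := by
      rw [hystar, norm_smul, Real.norm_eq_abs, abs_of_pos hc, ← ht]
      field_simp
    have hiy : (inner ℝ ystar xstar : ℝ) = (t - μ) * t := by
      rw [hystar, real_inner_smul_left, real_inner_self_eq_norm_sq, ← ht]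
      field_simp
    have hgy : g ystar = 1 / 2 * t ^ 2 - 1 / 2 * (t - μ) ^ 2 := by
      rw [hg', hny, hiy]; ring
    have key : ∀ y : EuclideanSpace ℝ (Fin n), g ystar ≤ g y := by
      intro y
      rw [hgy, hg' y]
      nlinarith [hCS y, sq_nonneg (‖y‖ - (t - μ))]
    refine ⟨key, fun y hy => ?_⟩
    have h1 := hy ystar
    have h2 := key y
    have heq : g y = g ystar := le_antisymm h1 h2
    rw [hgy, hg' y] at heq
    have hn : ‖y‖ = t - μ := by
      nlinarith [hCS y, sq_nonneg (‖y‖ - (t - μ))]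
    have hin : (inner ℝ y xstar : ℝ) = ‖y‖ * ‖xstar‖ := by
      rw [hn, ← ht]; nlinarith
    have := (inner_eq_norm_mul_iff_real).mp hin
    -- this : ‖xstar‖ • y = ‖y‖ • xstar
    rw [hn, ← ht] at this
    have hy' : y = (t⁻¹ * (t - μ)) • xstar := by
      rw [mul_smul, ← this, smul_smul, inv_mul_cancel₀ (ne_of_gt ht0), one_smul]
    rw [hy', hystar]
    congr 1
    field_simp
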